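/- The path space (Π,d) is a separable metric space. -/
import Mathlib


open Filter Topology

/-- `tanh` extended to `[-∞,∞]` with `tanh(±∞) = ±1`. -/
noncomputable def etanh (x : EReal) : ℝ :=
  if x = ⊤ then 1 else if x = ⊥ then -1 else Real.tanh x.toReal

/-- `Φ(x,t) = tanh(x)/(1+|t|)`, extended to `[-∞,∞]²` (equal to `0` when `t = ±∞`). -/
noncomputable def PhiBar (x t : EReal) : ℝ :=
  if t = ⊤ ∨ t = ⊥ then 0 else etanh x / (1 + |t.toReal|)
/-- `Ψ(t) = tanh(t)` extended to `[-∞,∞]`. -/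
noncomputable def PsiBar (t : EReal) : ℝ := etanh t

/-- The path space `Π`: a path is a pair of a starting time `t₀ ∈ [-∞,∞]` and a function
`f̂ : [-∞,∞] → [-∞,∞]` (the extension of `f : [t₀,∞] → [-∞,∞]` which is constant `= f(t₀)`
before `t₀`), such that `t ↦ Φ(f̂(t),t)` is continuous. -/
def PathSpace : Type :=
  { p : EReal × (EReal → EReal) //
      (∀ s, s ≤ p.1 → p.2 s = p.2 p.1) ∧ Continuous (fun s => PhiBar (p.2 s) s) }

/-- The metric `d((f₁,t₁),(f₂,t₂)) = sup_t |Φ(f̂₁(t),t) - Φ(f̂₂(t),t)| ⊔ |Ψ(t₁) - Ψ(t₂)|`. -/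
noncomputable def pathDist (p q : PathSpace) : ℝ :=
  (⨆ s : EReal, |PhiBar (p.1.2 s) s - PhiBar (q.1.2 s) s|) ⊔ |PsiBar p.1.1 - PsiBar q.1.1|
/-- The path space `(Π,d)` is separable: it has a countable `d`-dense subset. -/
noncomputable def pathEmb (p : PathSpace) : ℝ × C(EReal, ℝ) :=
  (PsiBar p.1.1, ⟨fun s => PhiBar (p.1.2 s) s, p.2.2⟩)

lemma pathDist_eq_dist (p q : PathSpace) : pathDist p q = dist (pathEmb p) (pathEmb q) := by
  simp only [pathDist, pathEmb, Prod.dist_eq, ← BoundedContinuousFunction.dist_mkOfCompact,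
    BoundedContinuousFunction.dist_eq_iSup, BoundedContinuousFunction.mkOfCompact_apply,
    ContinuousMap.coe_mk, Real.dist_eq]
  rw [max_comm]

theorem stmt_4 :
    ∃ D : Set PathSpace, D.Countable ∧
      ∀ p : PathSpace, ∀ ε > (0:ℝ), ∃ q ∈ D, pathDist p q < ε := by
  obtain ⟨D₀, hD₀c, hD₀d⟩ :=
    TopologicalSpace.exists_countable_dense (Set.range pathEmb : Set (ℝ × C(EReal, ℝ)))
  have hchoice : ∀ x : D₀, ∃ p : PathSpace, pathEmb p = ((x : Set.range pathEmb) : ℝ × C(EReal, ℝ)) := by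
    rintro ⟨⟨y, hy⟩, _⟩
    obtain ⟨p, rfl⟩ := hy
    exact ⟨p, rfl⟩
  choose ch hch using hchoice
  have : Countable D₀ := hD₀c.to_subtype
  refine ⟨Set.range ch, Set.countable_range ch, ?_⟩
  intro p ε hε
  have hmem : (⟨pathEmb p, Set.mem_range_self p⟩ : Set.range pathEmb) ∈
      closure D₀ := hD₀d _
  rw [Metric.mem_closure_iff] at hmem
  obtain ⟨q₀, hq₀, hdist⟩ := hmem ε hε
  refine ⟨ch ⟨q₀, hq₀⟩, Set.mem_range_self _, ?_⟩
  rw [pathDist_eq_dist, hch ⟨q₀, hq₀⟩]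
  exact hdist
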